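/- Let G be a connected finite simple graph with independence number at most 2. Then for every pair of distinct vertices u, v, the vertex set of G can be partitioned into two vertex-disjoint paths, one starting at u and the other starting at v. -/

import Mathlib

open SimpleGraph

variable {V : Type*}

/-- `G` has independence number at most `k`: every independent set has at most `k` vertices. -/
def IndepBound (G : SimpleGraph V) (k : ℕ) : Prop :=
  ∀ s : Finset V, (∀ a ∈ s, ∀ b ∈ s, a ≠ b → ¬ G.Adj a b) → s.card ≤ k

/-- The induced subgraph on `A` has independence number at most `k`. -/
def IndepBoundOn (G : SimpleGraph V) (A : Set V) (k : ℕ) : Prop :=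
  ∀ s : Finset V, ↑s ⊆ A → (∀ a ∈ s, ∀ b ∈ s, a ≠ b → ¬ G.Adj a b) → s.card ≤ k

/-- `x` is a cut vertex (articulation point): `G - x` is disconnected. -/
def IsCutVertex (G : SimpleGraph V) (x : V) : Prop :=
  ¬ (G.induce ({x}ᶜ : Set V)).Preconnected

/-- `S` is a vertex cut: `G - S` is disconnected. -/
def IsCutSet (G : SimpleGraph V) (S : Set V) : Prop :=
  ¬ (G.induce Sᶜ).Preconnected

/-- `G` has a Hamiltonian path with endpoints `u` and `v`. -/
def HasHamPathBetween [DecidableEq V] (G : SimpleGraph V) (u v : V) : Prop :=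
  ∃ p : G.Walk u v, p.IsHamiltonian

/-- `G` has a Hamiltonian path starting at `u`. -/
def HasHamPathFrom [DecidableEq V] (G : SimpleGraph V) (u : V) : Prop :=
  ∃ v, ∃ p : G.Walk u v, p.IsHamiltonian

/-- `G` has a Hamiltonian path. -/
def HasHamPath [DecidableEq V] (G : SimpleGraph V) : Prop :=
  ∃ u v, ∃ p : G.Walk u v, p.IsHamiltonian

/-- `G` has a path cover of size two: two vertex-disjoint paths, one starting at `u`
and the other starting at `v`, whose vertex sets partition `V(G)`. -/
def HasPathCover2 (G : SimpleGraph V) (u v : V) : Prop :=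
  ∃ (a b : V) (p : G.Walk u a) (q : G.Walk v b), p.IsPath ∧ q.IsPath ∧
    ∀ w, (w ∈ p.support ∧ w ∉ q.support) ∨ (w ∈ q.support ∧ w ∉ p.support)

/-- `G` is `s`-connected: more than `s` vertices, and removing any fewer than `s`
vertices leaves the graph connected. -/
def SConnected (G : SimpleGraph V) (s : ℕ) : Prop :=
  s < Nat.card V ∧ ∀ S : Set V, S.ncard < s → (G.induce Sᶜ).Connected

private lemma walk_boundary {G : SimpleGraph V} (C : V → Prop) :
    ∀ {x y : V}, G.Walk x y → ¬ C x → C y → ∃ d e, ¬ C d ∧ C e ∧ G.Adj d e := by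
  intro x y W
  induction W with
  | nil => exact fun h1 h2 => absurd h2 h1
  | @cons a b c h p ih =>
    intro h1 h2
    by_cases hc : C b
    · exact ⟨a, b, h1, hc, h⟩
    · exact ih hc h2

private lemma walk_cons_of_ne {G : SimpleGraph V} {s t : V} (D : G.Walk s t) (h : s ≠ t) :
    ∃ (y : V) (hy : G.Adj s y) (D' : G.Walk y t), D = Walk.cons hy D' := by
  cases D with
  | nil => exact absurd rfl h
  | cons hy D' => exact ⟨_, hy, D', rfl⟩

private lemma concat_isPath {G : SimpleGraph V} {u a w : V} {p : G.Walk u a}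
    (hp : p.IsPath) (h : G.Adj a w) (hw : w ∉ p.support) : (p.concat h).IsPath := by
  rw [Walk.isPath_def, Walk.support_concat, List.nodup_append]
  refine ⟨hp.support_nodup, List.nodup_singleton w, ?_⟩
  intro z hz z' hz' hzz
  simp only [List.mem_singleton] at hz'
  subst hzz; subst hz'
  exact hw hz

private lemma mem_support_concat {G : SimpleGraph V} {u a w : V} (p : G.Walk u a)
    (h : G.Adj a w) (z : V) : z ∈ (p.concat h).support ↔ z ∈ p.support ∨ z = w := by
  rw [Walk.support_concat]
  simp

/-- Given a path `R` from `u` to `v` covering a set of vertices, and an uncovered vertex `w`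
adjacent to a covered vertex `x`, there is a pair of disjoint paths from `u` and from `v`
covering everything `R` covers plus `w`. -/
private lemma extend_cover {G : SimpleGraph V} {u v : V} (huv : u ≠ v)
    (R : G.Walk u v) (hR : R.IsPath) (w x : V) [DecidableEq V] (hx : x ∈ R.support)
    (hw : w ∉ R.support) (hadj : G.Adj x w) :
    ∃ (c d : V) (p' : G.Walk u c) (q' : G.Walk v d), p'.IsPath ∧ q'.IsPath ∧
      (∀ z ∈ p'.support, z ∉ q'.support) ∧
      (∀ z, (z ∈ p'.support ∨ z ∈ q'.support) ↔ (z = w ∨ z ∈ R.support)) := by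
  by_cases hxv : x = v
  · -- `x` is the far endpoint `v` of `R`.
    have hadj' : G.Adj v w := hxv ▸ hadj
    obtain ⟨y, hy, t, ht⟩ := walk_cons_of_ne R.reverse (Ne.symm huv)
    have hRs : R.support.reverse = v :: t.support := by
      rw [← Walk.support_reverse, ht, Walk.support_cons]
    have hmem : ∀ z, z ∈ R.support ↔ z = v ∨ z ∈ t.support := by
      intro z
      rw [← List.mem_reverse, hRs]
      simp
    have hnd : (v :: t.support).Nodup := by
      rw [← hRs]
      exact List.nodup_reverse.mpr hR.support_nodup
    rw [List.nodup_cons] at hnd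
    have hvw : v ≠ w := fun h => hw (h ▸ R.end_mem_support)
    refine ⟨y, w, t.reverse, Walk.cons hadj' Walk.nil, ?_, ?_, ?_, ?_⟩
    · rw [Walk.isPath_reverse_iff, Walk.isPath_def]
      exact hnd.2
    · rw [Walk.cons_isPath_iff]
      exact ⟨Walk.IsPath.nil, by simpa using hvw⟩
    · intro z hz
      rw [Walk.support_reverse, List.mem_reverse] at hz
      simp only [Walk.support_cons, Walk.support_nil, List.mem_cons, List.mem_singleton,
        List.not_mem_nil, or_false]
      rintro (h | h)
      · exact hnd.1 (h ▸ hz)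
      · exact hw ((hmem w).mpr (Or.inr (h ▸ hz)))
    · intro z
      rw [Walk.support_reverse, List.mem_reverse, hmem z]
      simp only [Walk.support_cons, Walk.support_nil, List.mem_cons, List.mem_singleton,
        List.not_mem_nil, or_false]
      tauto
  · -- `x` has a successor on `R`.
    obtain ⟨y, hxy, D', hD⟩ := walk_cons_of_ne (R.dropUntil x hx) hxv
    have hspec := R.take_spec hx
    have hsupR : R.support = (R.takeUntil x hx).support ++ D'.support := by
      conv_lhs => rw [← hspec]
      rw [Walk.support_append, hD, Walk.support_cons, List.tail_cons]
    have hnd : ((R.takeUntil x hx).support ++ D'.support).Nodup := by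
      rw [← hsupR]; exact hR.support_nodup
    rw [List.nodup_append] at hnd
    have hmem : ∀ z, z ∈ R.support ↔ z ∈ (R.takeUntil x hx).support ∨ z ∈ D'.support := by
      intro z; rw [hsupR]; simp
    have hwT : w ∉ (R.takeUntil x hx).support := fun h => hw ((hmem w).mpr (Or.inl h))
    have hwD : w ∉ D'.support := fun h => hw ((hmem w).mpr (Or.inr h))
    refine ⟨w, y, (R.takeUntil x hx).concat hadj, D'.reverse, ?_, ?_, ?_, ?_⟩
    · exact concat_isPath (hR.takeUntil hx) hadj hwT
    · rw [Walk.isPath_reverse_iff, Walk.isPath_def]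
      exact hnd.2.1
    · intro z hz
      rw [mem_support_concat] at hz
      rw [Walk.support_reverse, List.mem_reverse]
      rcases hz with hz | rfl
      · exact fun h => hnd.2.2 z hz z h rfl
      · exact hwD
    · intro z
      rw [mem_support_concat, Walk.support_reverse, List.mem_reverse, hmem z]
      tauto

/-- A connected graph with independence number at most 2 has a path cover PC(u,v) for
every pair of distinct vertices u, v. -/
theorem stmt_5 [Fintype V] [DecidableEq V] (G : SimpleGraph V)
    (hconn : G.Connected) (hα : IndepBound G 2) (u v : V) (huv : u ≠ v) :
    HasPathCover2 G u v := by
  suffices H : ∀ n (a b : V) (p : G.Walk u a) (q : G.Walk v b), p.IsPath → q.IsPath →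
      (∀ z ∈ p.support, z ∉ q.support) →
      (Finset.univ.filter (fun z => z ∉ p.support ∧ z ∉ q.support)).card ≤ n →
      HasPathCover2 G u v by
    refine H (Fintype.card V) u v Walk.nil Walk.nil Walk.IsPath.nil Walk.IsPath.nil ?_ ?_
    · intro z hz
      simp only [Walk.support_nil, List.mem_singleton] at hz ⊢
      subst hz; exact huv
    · exact le_trans (Finset.card_filter_le _ _) (by simp)
  intro n
  induction n with
  | zero =>
    intro a b p q hp hq hdisj hcard
    refine ⟨a, b, p, q, hp, hq, fun z => ?_⟩
    have hz : z ∈ p.support ∨ z ∈ q.support := by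
      by_contra h
      push_neg at h
      have hzm : z ∈ Finset.univ.filter (fun z => z ∉ p.support ∧ z ∉ q.support) := by
        simp [h.1, h.2]
      have := Finset.card_pos.mpr ⟨z, hzm⟩
      omega
    rcases hz with hz | hz
    · exact Or.inl ⟨hz, hdisj z hz⟩
    · exact Or.inr ⟨hz, fun hzp => hdisj z hzp hz⟩
  | succ n ih =>
    intro a b p q hp hq hdisj hcard
    by_cases hall : ∀ z, z ∈ p.support ∨ z ∈ q.support
    · refine ⟨a, b, p, q, hp, hq, fun z => ?_⟩
      rcases hall z with hz | hz
      · exact Or.inl ⟨hz, hdisj z hz⟩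
      · exact Or.inr ⟨hz, fun hzp => hdisj z hzp hz⟩
    · push_neg at hall
      obtain ⟨w0, hw0p, hw0q⟩ := hall
      obtain ⟨W⟩ := hconn.preconnected w0 u
      obtain ⟨w, x, hwC, hxC, hadjxw⟩ :=
        walk_boundary (fun z => z ∈ p.support ∨ z ∈ q.support) W
          (fun h => h.elim hw0p hw0q) (Or.inl p.start_mem_support)
      push_neg at hwC
      obtain ⟨hwp, hwq⟩ := hwC
      have key : ∃ (c d : V) (p' : G.Walk u c) (q' : G.Walk v d), p'.IsPath ∧ q'.IsPath ∧
          (∀ z ∈ p'.support, z ∉ q'.support) ∧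
          (∀ z, (z ∈ p'.support ∨ z ∈ q'.support) ↔ (z = w ∨ z ∈ p.support ∨ z ∈ q.support)) := by
        by_cases h1 : G.Adj a w
        · refine ⟨w, b, p.concat h1, q, concat_isPath hp h1 hwp, hq, ?_, ?_⟩
          · intro z hz
            rw [mem_support_concat] at hz
            rcases hz with hz | rfl
            · exact hdisj z hz
            · exact hwq
          · intro z
            rw [mem_support_concat]
            tauto
        by_cases h2 : G.Adj b w
        · refine ⟨a, w, p, q.concat h2, hp, concat_isPath hq h2 hwq, ?_, ?_⟩
          · intro z hz hz'
            rw [mem_support_concat] at hz'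
            rcases hz' with hz' | rfl
            · exact hdisj z hz hz'
            · exact hwp hz
          · intro z
            rw [mem_support_concat]
            tauto
        -- Neither endpoint is adjacent to `w`; by the independence bound, `a ~ b`.
        have hba : a ≠ b := fun h => hdisj a p.end_mem_support (h ▸ q.end_mem_support)
        have hwa : w ≠ a := fun h => hwp (h ▸ p.end_mem_support)
        have hwb : w ≠ b := fun h => hwq (h ▸ q.end_mem_support)
        have hab : G.Adj a b := by
          by_contra hab
          have h3 := hα {w, a, b} ?_
          · have hc : ({w, a, b} : Finset V).card = 3 := by
              rw [Finset.card_insert_of_notMem (by simp [hwa, hwb]),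
                Finset.card_insert_of_notMem (by simp [hba]), Finset.card_singleton]
            omega
          · intro c hc d hd hcd
            simp only [Finset.mem_insert, Finset.mem_singleton] at hc hd
            rcases hc with rfl | rfl | rfl <;> rcases hd with rfl | rfl | rfl <;>
              first
                | exact absurd rfl hcd
                | exact fun h => h1 h.symm
                | exact fun h => h2 h.symm
                | exact h1
                | exact h2
                | exact hab
                | exact fun h => hab h.symm
        set R : G.Walk u v := p.append (Walk.cons hab q.reverse) with hRdef
        have hRsupp : R.support = p.support ++ q.support.reverse := by
          rw [hRdef, Walk.support_append, Walk.support_cons, List.tail_cons,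
            Walk.support_reverse]
        have hRmem : ∀ z, z ∈ R.support ↔ z ∈ p.support ∨ z ∈ q.support := by
          intro z; rw [hRsupp]; simp
        have hRpath : R.IsPath := by
          rw [Walk.isPath_def, hRsupp, List.nodup_append]
          refine ⟨hp.support_nodup, List.nodup_reverse.mpr hq.support_nodup, ?_⟩
          intro z hz z' hz' hzz
          subst hzz
          exact hdisj z hz (List.mem_reverse.mp hz')
        obtain ⟨c, d, p', q', h1', h2', h3', h4'⟩ :=
          extend_cover huv R hRpath w x ((hRmem x).mpr hxC)
            (fun hwR => (by rcases (hRmem w).mp hwR with h | h; exacts [hwp h, hwq h]))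
            hadjxw.symm
        refine ⟨c, d, p', q', h1', h2', h3', fun z => ?_⟩
        rw [h4' z, hRmem z]
      obtain ⟨c, d, p', q', hp', hq', hdisj', hcov'⟩ := key
      apply ih c d p' q' hp' hq' hdisj'
      have hwmem : w ∈ Finset.univ.filter (fun z => z ∉ p.support ∧ z ∉ q.support) := by
        simp [hwp, hwq]
      have hset : Finset.univ.filter (fun z => z ∉ p'.support ∧ z ∉ q'.support)
          = (Finset.univ.filter (fun z => z ∉ p.support ∧ z ∉ q.support)).erase w := by
        ext z
        simp only [Finset.mem_filter, Finset.mem_erase, Finset.mem_univ, true_and]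
        have := not_congr (hcov' z)
        push_neg at this
        tauto
      rw [hset, Finset.card_erase_of_mem hwmem]
      have := Finset.card_pos.mpr ⟨w, hwmem⟩
      omega
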